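/- The frame vector fields satisfy, at every point of D, the Lie bracket relations [E₁, E₂] = 2τ E₃, [E₂, E₃] = σ E₁ and [E₃, E₁] = σ E₂, where [X,Y](p) = DY(p)(X(p)) − DX(p)(Y(p)) is the Lie bracket of vector fields on an open subset of ℝ³. -/

import Mathlib

noncomputable section

open Real

/-- Points/vectors of `ℝ³`. -/
abbrev V3 : Type := ℝ × ℝ × ℝ

/-- The domain `D`: all of `ℝ³` if `κ ≥ 0`, the solid cylinder
`{x² + y² < -4/κ}` if `κ < 0`. -/
def Dset (κ : ℝ) : Set V3 := {p | κ < 0 → p.1 ^ 2 + p.2.1 ^ 2 < -4 / κ}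

/-- The conformal factor `λ`. -/
def lam (κ : ℝ) (p : V3) : ℝ := 1 / (1 + κ / 4 * (p.1 ^ 2 + p.2.1 ^ 2))

/-- The Riemannian BCV metric `g_R` at the point `p`, evaluated on vectors `u, v`. -/
def gR (κ τ : ℝ) (p u v : V3) : ℝ :=
  (lam κ p) ^ 2 * (u.1 * v.1 + u.2.1 * v.2.1) +
    (u.2.2 + τ * lam κ p * (p.2.1 * u.1 - p.1 * u.2.1)) *
      (v.2.2 + τ * lam κ p * (p.2.1 * v.1 - p.1 * v.2.1))

/-- The Lorentzian BCV metric `g_L` at the point `p`, evaluated on vectors `u, v`. -/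
def gL (κ τ : ℝ) (p u v : V3) : ℝ :=
  (lam κ p) ^ 2 * (u.1 * v.1 + u.2.1 * v.2.1) -
    (u.2.2 + τ * lam κ p * (p.2.1 * u.1 - p.1 * u.2.1)) *
      (v.2.2 + τ * lam κ p * (p.2.1 * v.1 - p.1 * v.2.1))

/-- The frame field `E₁` (with `σ = κ/(2τ)`). -/
def E1 (κ τ : ℝ) (p : V3) : V3 :=
  ((lam κ p)⁻¹ * cos (κ / (2 * τ) * p.2.2),
   (lam κ p)⁻¹ * sin (κ / (2 * τ) * p.2.2),
   τ * (p.1 * sin (κ / (2 * τ) * p.2.2) - p.2.1 * cos (κ / (2 * τ) * p.2.2)))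

/-- The frame field `E₂` (with `σ = κ/(2τ)`). -/
def E2 (κ τ : ℝ) (p : V3) : V3 :=
  (-((lam κ p)⁻¹ * sin (κ / (2 * τ) * p.2.2)),
   (lam κ p)⁻¹ * cos (κ / (2 * τ) * p.2.2),
   τ * (p.1 * cos (κ / (2 * τ) * p.2.2) + p.2.1 * sin (κ / (2 * τ) * p.2.2)))

/-- The (constant) frame field `E₃ = ∂_z`. -/
def E3 : V3 := (0, 0, 1)

/-- The Killing field `ξ = E₃`. -/
def xi : V3 := E3

/-- First coefficient of a vector in the frame `{E₁,E₂,E₃}` (extracted with `g_R`;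
the frame is `g_R`-orthonormal on `D`). -/
def c1 (κ τ : ℝ) (p : V3) (u : V3) : ℝ := gR κ τ p u (E1 κ τ p)

/-- Second frame coefficient. -/
def c2 (κ τ : ℝ) (p : V3) (u : V3) : ℝ := gR κ τ p u (E2 κ τ p)

/-- Third frame coefficient. -/
def c3 (κ τ : ℝ) (p : V3) (u : V3) : ℝ := gR κ τ p u E3

/-- The Riemannian cross product `u ∧_R v` at `p`. -/
def wedgeR (κ τ : ℝ) (p : V3) (u v : V3) : V3 :=
  (c2 κ τ p u * c3 κ τ p v - c3 κ τ p u * c2 κ τ p v) • E1 κ τ p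
    - (c1 κ τ p u * c3 κ τ p v - c3 κ τ p u * c1 κ τ p v) • E2 κ τ p
    + (c1 κ τ p u * c2 κ τ p v - c2 κ τ p u * c1 κ τ p v) • E3

/-- The Lorentzian cross product `u ∧_L v` at `p`. -/
def wedgeL (κ τ : ℝ) (p : V3) (u v : V3) : V3 :=
  (c2 κ τ p u * c3 κ τ p v - c3 κ τ p u * c2 κ τ p v) • E1 κ τ p
    - (c1 κ τ p u * c3 κ τ p v - c3 κ τ p u * c1 κ τ p v) • E2 κ τ p
    - (c1 κ τ p u * c2 κ τ p v - c2 κ τ p u * c1 κ τ p v) • E3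

/-- The Lie bracket of vector fields on (an open subset of) `ℝ³`:
`[X,Y](p) = DY(p)(X(p)) − DX(p)(Y(p))`. -/
def lie (X Y : V3 → V3) (p : V3) : V3 :=
  fderiv ℝ Y p (X p) - fderiv ℝ X p (Y p)

/-- The explicit connection `∇ᴿ` of `𝔼³(κ,τ)`. -/
def nablaR (κ τ : ℝ) (X Y : V3 → V3) (p : V3) : V3 :=
  (fderiv ℝ (fun q => c1 κ τ q (Y q)) p (X p)) • E1 κ τ p
    + (fderiv ℝ (fun q => c2 κ τ q (Y q)) p (X p)) • E2 κ τ p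
    + (fderiv ℝ (fun q => c3 κ τ q (Y q)) p (X p)) • E3
    + (τ * c2 κ τ p (X p) * c3 κ τ p (Y p)) • E1 κ τ p
    - (τ * c1 κ τ p (X p) * c3 κ τ p (Y p)) • E2 κ τ p
    + (τ * (c1 κ τ p (X p) * c2 κ τ p (Y p) - c2 κ τ p (X p) * c1 κ τ p (Y p))) • E3
    + ((κ - 2 * τ ^ 2) / (2 * τ) * (c3 κ τ p (X p) * c1 κ τ p (Y p))) • E2 κ τ p
    - ((κ - 2 * τ ^ 2) / (2 * τ) * (c3 κ τ p (X p) * c2 κ τ p (Y p))) • E1 κ τ p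

/-- The explicit connection `∇ᴸ` of `𝕃³(κ,τ)`. -/
def nablaL (κ τ : ℝ) (X Y : V3 → V3) (p : V3) : V3 :=
  (fderiv ℝ (fun q => c1 κ τ q (Y q)) p (X p)) • E1 κ τ p
    + (fderiv ℝ (fun q => c2 κ τ q (Y q)) p (X p)) • E2 κ τ p
    + (fderiv ℝ (fun q => c3 κ τ q (Y q)) p (X p)) • E3
    - (τ * c2 κ τ p (X p) * c3 κ τ p (Y p)) • E1 κ τ p
    + (τ * c1 κ τ p (X p) * c3 κ τ p (Y p)) • E2 κ τ p
    + (τ * (c1 κ τ p (X p) * c2 κ τ p (Y p) - c2 κ τ p (X p) * c1 κ τ p (Y p))) • E3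
    + ((κ + 2 * τ ^ 2) / (2 * τ) * (c3 κ τ p (X p) * c1 κ τ p (Y p))) • E2 κ τ p
    - ((κ + 2 * τ ^ 2) / (2 * τ) * (c3 κ τ p (X p) * c2 κ τ p (Y p))) • E1 κ τ p

/-- `ω_L = √(ε + 2 g_L(N, ξ)²)`. -/
def omegaL (κ τ ε : ℝ) (p : V3) (N : V3) : ℝ :=
  Real.sqrt (ε + 2 * (gL κ τ p N xi) ^ 2)

/-- `ω_R = 1/ω_L`. -/
def omegaR (κ τ ε : ℝ) (p : V3) (N : V3) : ℝ := 1 / omegaL κ τ ε p N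

/-- The Riemannian unit normal `N_R = (1/ω_L)(√(2(ω_L² − ε)) ξ − N_L)`. -/
def NRof (κ τ ε : ℝ) (p : V3) (N : V3) : V3 :=
  (1 / omegaL κ τ ε p N) • (Real.sqrt (2 * ((omegaL κ τ ε p N) ^ 2 - ε)) • xi - N)

/-- `g_L(p)(n, ·)` as a linear form. -/
def gLlin (κ τ : ℝ) (p n : V3) : V3 →ₗ[ℝ] ℝ where
  toFun v := gL κ τ p n v
  map_add' v w := by
    simp only [gL, Prod.fst_add, Prod.snd_add]
    ring
  map_smul' r v := by
    simp only [gL, Prod.smul_fst, Prod.smul_snd, smul_eq_mul, RingHom.id_apply]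
    ring

/-- The tangent plane at `p` determined by the normal `n`:
`P_p = {v : g_L(n,v) = 0}`. -/
def Pp (κ τ : ℝ) (p n : V3) : Submodule ℝ V3 := LinearMap.ker (gLlin κ τ p n)

/-- The Lorentzian shape operator `A_L v = −∇ᴸ_v N_L`. -/
def AL (κ τ : ℝ) (NL : V3 → V3) (p : V3) (v : V3) : V3 :=
  -(nablaL κ τ (fun _ => v) NL p)

/-- The Riemannian shape operator `A_R v = −∇ᴿ_v N_R`. -/
def AR (κ τ ε : ℝ) (NL : V3 → V3) (p : V3) (v : V3) : V3 :=
  -(nablaR κ τ (fun _ => v) (fun q => NRof κ τ ε q (NL q)) p)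

/-- The tangential part `T_L = ξ − ε g_L(N_L, ξ) N_L`. -/
def TLof (κ τ ε : ℝ) (p : V3) (N : V3) : V3 := xi - (ε * gL κ τ p N xi) • N

/-- The tangential part `T_R = ξ − g_R(N_R, ξ) N_R`. -/
def TRof (κ τ ε : ℝ) (p : V3) (N : V3) : V3 :=
  xi - (gR κ τ p (NRof κ τ ε p N) xi) • NRof κ τ ε p N

/-- The rotation `J_L v = N_L ∧_L v`. -/
def JL (κ τ : ℝ) (p : V3) (N : V3) (v : V3) : V3 := wedgeL κ τ p N v

/-- The rotation `J_R v = N_R ∧_R v`. -/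
def JR (κ τ : ℝ) (p : V3) (N : V3) (v : V3) : V3 := wedgeR κ τ p N v

set_option maxHeartbeats 1000000 in
/-- the Lie bracket relations `[E₁,E₂] = 2τE₃`, `[E₂,E₃] = σE₁`,
`[E₃,E₁] = σE₂`, with `σ = κ/(2τ)`. -/
theorem frame_brackets (κ τ : ℝ) (hτ : τ ≠ 0) (p : V3) (hp : p ∈ Dset κ) :
    lie (fun q => E1 κ τ q) (fun q => E2 κ τ q) p = (2 * τ) • E3 ∧
    lie (fun q => E2 κ τ q) (fun _ => E3) p = (κ / (2 * τ)) • E1 κ τ p ∧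
    lie (fun _ => E3) (fun q => E1 κ τ q) p = (κ / (2 * τ)) • E2 κ τ p := by

  have hE1eq : (fun q : V3 => E1 κ τ q) = fun q : V3 =>
      ((1 + κ/4 * (q.1*q.1 + q.2.1*q.2.1)) * cos (κ/(2*τ) * q.2.2),
       (1 + κ/4 * (q.1*q.1 + q.2.1*q.2.1)) * sin (κ/(2*τ) * q.2.2),
       τ * (q.1 * sin (κ/(2*τ) * q.2.2) - q.2.1 * cos (κ/(2*τ) * q.2.2))) := by
    funext q; simp [E1, lam]; ring_nf; tauto
  have hE2eq : (fun q : V3 => E2 κ τ q) = fun q : V3 =>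
      (-((1 + κ/4 * (q.1*q.1 + q.2.1*q.2.1)) * sin (κ/(2*τ) * q.2.2)),
       (1 + κ/4 * (q.1*q.1 + q.2.1*q.2.1)) * cos (κ/(2*τ) * q.2.2),
       τ * (q.1 * cos (κ/(2*τ) * q.2.2) + q.2.1 * sin (κ/(2*τ) * q.2.2))) := by
    funext q; simp [E2, lam]; ring_nf; tauto
  have hx : HasFDerivAt (fun q : V3 => q.1) (ContinuousLinearMap.fst ℝ ℝ (ℝ × ℝ)) p :=
    hasFDerivAt_fst
  have hy := (hasFDerivAt_snd (𝕜 := ℝ) (E := ℝ) (F := ℝ × ℝ) (p := p)).fst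
  have hz := (hasFDerivAt_snd (𝕜 := ℝ) (E := ℝ) (F := ℝ × ℝ) (p := p)).snd
  have hcos := (Real.hasDerivAt_cos (κ/(2*τ) * p.2.2)).comp_hasFDerivAt p (hz.const_mul (κ/(2*τ)))
  have hsin := (Real.hasDerivAt_sin (κ/(2*τ) * p.2.2)).comp_hasFDerivAt p (hz.const_mul (κ/(2*τ)))
  have hμ := (hasFDerivAt_const (1:ℝ) p).add (((hx.mul hx).add (hy.mul hy)).const_mul (κ/4))
  have hE1' : HasFDerivAt (fun q : V3 => E1 κ τ q) _ p :=
    hE1eq ▸ (HasFDerivAt.prodMk (hμ.mul hcos) (HasFDerivAt.prodMk (hμ.mul hsin)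
      (((hx.mul hsin).sub (hy.mul hcos)).const_mul τ)))
  have hE2' : HasFDerivAt (fun q : V3 => E2 κ τ q) _ p :=
    hE2eq ▸ (HasFDerivAt.prodMk ((hμ.mul hsin).neg) (HasFDerivAt.prodMk (hμ.mul hcos)
      (((hx.mul hcos).add (hy.mul hsin)).const_mul τ)))
  have hconst : fderiv ℝ (fun _ : V3 => E3) p = 0 := fderiv_const_apply E3
  have hκ' : κ = 2*(κ/(2*τ))*τ := by field_simp
  have hpy := Real.sin_sq_add_cos_sq (κ/(2*τ) * p.2.2)
  refine ⟨?_, ?_, ?_⟩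
  · unfold lie
    rw [hE1'.fderiv, hE2'.fderiv]
    simp [E1, E2, E3, lam, Prod.ext_iff, Function.comp]
    set σ := κ/(2*τ) with hσ
    have hκ : κ = 2*σ*τ := hκ'
    rw [hκ]
    refine ⟨by ring, by ring, by linear_combination (2*τ) * hpy⟩
  · unfold lie
    rw [hE2'.fderiv, hconst]
    simp [E1, E2, E3, lam, Prod.ext_iff, Function.comp]
    set σ := κ/(2*τ) with hσ
    have hκ : κ = 2*σ*τ := hκ'
    rw [hκ]
    refine ⟨by ring, by ring, by ring⟩
  · unfold lie
    rw [hE1'.fderiv, hconst]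
    simp [E1, E2, E3, lam, Prod.ext_iff, Function.comp]
    set σ := κ/(2*τ) with hσ
    have hκ : κ = 2*σ*τ := hκ'
    rw [hκ]
    refine ⟨by ring, by ring, by ring⟩

end
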